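/- Let (K, L, c) be a feasibility problem where K = K^{n_1} × … × K^{n_m} is an extended second order cone, L ⊆ ℝ^n a linear subspace, c ∈ ℝ^n. Suppose there is a nonzero a ∈ K ∩ L such that H₁(a) ∪ H₂(a) ≠ ∅, and let K̃ be the relaxed cone obtained from K and a. Then (K, L, c) is in weak status if and only if (K̃, L, c) is in weak status. -/

import Mathlib

open scoped RealInnerProductSpace Pointwise
open Classical

noncomputable section

/-- The Lorentz (second order) cone `SOC^{k+1} = {x = (x₀, x̄) : ‖x̄‖ ≤ x₀} ⊆ ℝ^{k+1}`. -/
def SOC (k : ℕ) : Set (EuclideanSpace ℝ (Fin (k + 1))) :=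
  {x | Real.sqrt (∑ j : Fin k, x j.succ ^ 2) ≤ x 0}

/-- The reflection `x' = (x₀, -x̄)` of `x` with respect to the Lorentz cone. -/
def reflect {k : ℕ} (x : EuclideanSpace ℝ (Fin (k + 1))) : EuclideanSpace ℝ (Fin (k + 1)) :=
  WithLp.toLp 2 (fun j => if j = 0 then x 0 else - x j)

/-- The closed half-space `H_d = {x : dᵀx ≥ 0}`. -/
def halfSpace {k : ℕ} (d : EuclideanSpace ℝ (Fin (k + 1))) :
    Set (EuclideanSpace ℝ (Fin (k + 1))) :=
  {x | 0 ≤ ⟪d, x⟫}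

/-- The ray `ray_d = {α • d : α ≥ 0}`. -/
def ray {k : ℕ} (d : EuclideanSpace ℝ (Fin (k + 1))) :
    Set (EuclideanSpace ℝ (Fin (k + 1))) :=
  {x | ∃ α : ℝ, 0 ≤ α ∧ x = α • d}

/-- A block of an extended second order cone: the trivial cone `{0}`, the whole space,
the Lorentz cone, a closed half-space `H_d` with `d ∈ SOC \ {0}`, or a ray `ray_d` with
`d ∈ SOC`. -/
def IsESOCBlock {k : ℕ} (B : Set (EuclideanSpace ℝ (Fin (k + 1)))) : Prop :=
  B = {0} ∨ B = Set.univ ∨ B = SOC k ∨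
    (∃ d ∈ SOC k, d ≠ 0 ∧ B = halfSpace d) ∨ ∃ d ∈ SOC k, B = ray d

/-- The total space `ℝ^n = ℝ^{n_1} × ⋯ × ℝ^{n_m}` with the Euclidean (ℓ²) structure. -/
abbrev TS {m : ℕ} (k : Fin m → ℕ) := PiLp 2 fun i => EuclideanSpace ℝ (Fin (k i + 1))

/-- The product cone `K = K^{n_1} × ⋯ × K^{n_m}` determined by the blocks `B i`. -/
def prodSet {m : ℕ} (k : Fin m → ℕ) (B : ∀ i, Set (EuclideanSpace ℝ (Fin (k i + 1)))) :
    Set (TS k) :=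
  {x | ∀ i, x i ∈ B i}

/-- `B` describes an extended second order cone (blockwise). -/
def IsESOC {m : ℕ} (k : Fin m → ℕ) (B : ∀ i, Set (EuclideanSpace ℝ (Fin (k i + 1)))) : Prop :=
  ∀ i, IsESOCBlock (B i)

/-- `H₁(a, K) = {i : K^{n_i} = SOC^{n_i}, a_{n_i} ∈ ri SOC^{n_i}}`. -/
def H1 {m : ℕ} (k : Fin m → ℕ) (B : ∀ i, Set (EuclideanSpace ℝ (Fin (k i + 1))))
    (a : TS k) : Set (Fin m) :=
  {i | B i = SOC (k i) ∧ a i ∈ intrinsicInterior ℝ (SOC (k i))}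

/-- `H₂(a, K) = {i : K^{n_i} = SOC^{n_i}, a_{n_i} ∈ (rel bd SOC^{n_i}) \ {0}}`. -/
def H2 {m : ℕ} (k : Fin m → ℕ) (B : ∀ i, Set (EuclideanSpace ℝ (Fin (k i + 1))))
    (a : TS k) : Set (Fin m) :=
  {i | B i = SOC (k i) ∧ a i ∈ intrinsicFrontier ℝ (SOC (k i)) ∧ a i ≠ 0}

/-- The relaxed cone `K̃` obtained from `K` and `a` (blockwise): block `i` becomes the whole
space if `i ∈ H₁(a, K)`, the half-space `H_{(a_{n_i})'}` if `i ∈ H₂(a, K)`, and is unchanged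
otherwise. -/
def relaxedBlocks {m : ℕ} (k : Fin m → ℕ) (B : ∀ i, Set (EuclideanSpace ℝ (Fin (k i + 1))))
    (a : TS k) : ∀ i, Set (EuclideanSpace ℝ (Fin (k i + 1))) :=
  fun i =>
    if i ∈ H1 k B a then Set.univ
    else if i ∈ H2 k B a then halfSpace (reflect (a i))
    else B i

/-- The affine set `L + c`. -/
def affineSet {V : Type*} [AddCommGroup V] [Module ℝ V] (L : Submodule ℝ V) (c : V) :
    Set V :=
  {x | x - c ∈ L}

/-- The distance between two sets. -/
def setDist {V : Type*} [NormedAddCommGroup V] (A B : Set V) : ℝ :=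
  sInf (Set.image2 dist A B)

/-- `(K, L, c)` is strongly feasible: `(L + c) ∩ ri K ≠ ∅`. -/
def StronglyFeasible {V : Type*} [NormedAddCommGroup V] [Module ℝ V]
    (K : Set V) (L : Submodule ℝ V) (c : V) : Prop :=
  (affineSet L c ∩ intrinsicInterior ℝ K).Nonempty

/-- `(K, L, c)` is weakly feasible: `K ∩ (L + c) ≠ ∅` but `(L + c) ∩ ri K = ∅`. -/
def WeaklyFeasible {V : Type*} [NormedAddCommGroup V] [Module ℝ V]
    (K : Set V) (L : Submodule ℝ V) (c : V) : Prop :=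
  (K ∩ affineSet L c).Nonempty ∧ affineSet L c ∩ intrinsicInterior ℝ K = ∅

/-- `(K, L, c)` is weakly infeasible: `K ∩ (L + c) = ∅` but `dist(K, L + c) = 0`. -/
def WeaklyInfeasible {V : Type*} [NormedAddCommGroup V] [Module ℝ V]
    (K : Set V) (L : Submodule ℝ V) (c : V) : Prop :=
  K ∩ affineSet L c = ∅ ∧ setDist K (affineSet L c) = 0

/-- `(K, L, c)` is strongly infeasible: `K ∩ (L + c) = ∅` and `dist(K, L + c) > 0`. -/
def StronglyInfeasible {V : Type*} [NormedAddCommGroup V] [Module ℝ V]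
    (K : Set V) (L : Submodule ℝ V) (c : V) : Prop :=
  K ∩ affineSet L c = ∅ ∧ 0 < setDist K (affineSet L c)

/-- `(K, L, c)` is in weak status: weakly feasible or weakly infeasible. -/
def WeakStatus {V : Type*} [NormedAddCommGroup V] [Module ℝ V]
    (K : Set V) (L : Submodule ℝ V) (c : V) : Prop :=
  WeaklyFeasible K L c ∨ WeaklyInfeasible K L c



variable {V : Type*} [NormedAddCommGroup V] [NormedSpace ℝ V]

lemma coe_affineSpan_of_zero_mem {s : Set V} (h : (0:V) ∈ s) :
    (affineSpan ℝ s : Set V) = (Submodule.span ℝ s : Set V) := by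
  rw [← affineSpan_insert_zero, Set.insert_eq_of_mem h]

lemma mem_affineSpan_iff {s : Set V} (h : (0:V) ∈ s) {x : V} :
    x ∈ affineSpan ℝ s ↔ x ∈ Submodule.span ℝ s := by
  rw [← SetLike.mem_coe, ← SetLike.mem_coe, coe_affineSpan_of_zero_mem h]

/-- Metric characterization of membership in the relative (intrinsic) interior. -/
def RiM (B : Set V) (x : V) : Prop :=
  x ∈ Submodule.span ℝ B ∧ ∃ ε > 0, ∀ y ∈ Submodule.span ℝ B, dist y x < ε → y ∈ B

lemma mem_intrinsicInterior_iff_riM {B : Set V} (h0 : (0:V) ∈ B) {x : V} :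
    x ∈ intrinsicInterior ℝ B ↔ RiM B x := by
  constructor
  · intro hx
    obtain ⟨y, hy, rfl⟩ := mem_intrinsicInterior.1 hx
    rw [mem_interior_iff_mem_nhds, Metric.mem_nhds_iff] at hy
    obtain ⟨ε, hε, hball⟩ := hy
    refine ⟨(mem_affineSpan_iff h0).1 y.2, ε, hε, fun z hz hd => ?_⟩
    exact hball (show (⟨z, (mem_affineSpan_iff h0).2 hz⟩ : affineSpan ℝ B) ∈ Metric.ball y ε from by
      rw [Metric.mem_ball]; exact hd)
  · rintro ⟨hx, ε, hε, h⟩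
    exact mem_intrinsicInterior.2 ⟨⟨x, (mem_affineSpan_iff h0).2 hx⟩, by
      rw [mem_interior_iff_mem_nhds, Metric.mem_nhds_iff]
      exact ⟨ε, hε, fun z hz => h z.1 ((mem_affineSpan_iff h0).1 z.2) (Metric.mem_ball.1 hz)⟩, rfl⟩

lemma RiM.mem' {B : Set V} {x : V} (h : RiM B x) : x ∈ B := by
  obtain ⟨hx, ε, hε, hb⟩ := h
  exact hb x hx (by simpa using hε)

lemma RiM.mono' {B B' : Set V} (hsub : B ⊆ B')
    (hsp : Submodule.span ℝ B' ≤ Submodule.span ℝ B) {x : V} (h : RiM B x) : RiM B' x := by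
  obtain ⟨hx, ε, hε, hb⟩ := h
  exact ⟨Submodule.span_mono hsub hx, ε, hε, fun y hy hd => hsub (hb y (hsp hy) hd)⟩

lemma RiM.add_mem' {B : Set V} (hadd : ∀ u ∈ B, ∀ v ∈ B, u + v ∈ B) {x a : V}
    (ha : a ∈ B) (h : RiM B x) : RiM B (x + a) := by
  obtain ⟨hx, ε, hε, hb⟩ := h
  refine ⟨Submodule.add_mem _ hx (Submodule.subset_span ha), ε, hε, fun y hy hd => ?_⟩
  have h1 : y - a ∈ Submodule.span ℝ B := Submodule.sub_mem _ hy (Submodule.subset_span ha)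
  have h2 : dist (y - a) x < ε := by
    rw [dist_eq_norm] at hd ⊢
    have : y - a - x = y - (x + a) := by abel
    rw [this]; exact hd
  have h3 := hadd _ (hb _ h1 h2) _ ha
  simpa using h3

lemma riM_of_ball {B : Set V} {x : V} {ε : ℝ} (hε : 0 < ε) (h : Metric.ball x ε ⊆ B) : RiM B x :=
  ⟨Submodule.subset_span (h (Metric.mem_ball_self hε)), ε, hε,
    fun y _ hd => h (Metric.mem_ball.2 hd)⟩

lemma RiM.ball' {B : Set V} {x : V} (hsp : Submodule.span ℝ B = ⊤) (h : RiM B x) :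
    ∃ ε > 0, Metric.ball x ε ⊆ B := by
  obtain ⟨_, ε, hε, hb⟩ := h
  exact ⟨ε, hε, fun y hy => hb y (by simp [hsp]) (Metric.mem_ball.1 hy)⟩

lemma riM_univ (x : V) : RiM Set.univ x := ⟨by simp, 1, one_pos, fun _ _ _ => trivial⟩

lemma riM_of_mem_interior {B : Set V} {x : V} (h : x ∈ interior B) : RiM B x := by
  rw [mem_interior_iff_mem_nhds, Metric.mem_nhds_iff] at h
  obtain ⟨ε, hε, hb⟩ := h
  exact riM_of_ball hε hb

lemma span_eq_top_of_ball {B : Set V} {x : V} {ε : ℝ} (hε : 0 < ε)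
    (h : Metric.ball x ε ⊆ B) : Submodule.span ℝ B = ⊤ :=
  Submodule.eq_top_of_nonempty_interior' _
    ⟨x, interior_maximal (h.trans Submodule.subset_span) Metric.isOpen_ball
      (Metric.mem_ball_self hε)⟩

lemma riM_shift_of_ball {B : Set V} (hcone : ∀ t : ℝ, 0 ≤ t → ∀ u ∈ B, t • u ∈ B)
    {a : V} {ε : ℝ} (hε : 0 < ε) (hball : Metric.ball a ε ⊆ B) (x : V) :
    ∃ T : ℝ, 0 ≤ T ∧ ∀ t : ℝ, T ≤ t → RiM B (x + t • a) := by
  refine ⟨2 * (‖x‖ + 1) / ε, by positivity, fun t ht => ?_⟩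
  have htpos : 0 < t := lt_of_lt_of_le (by positivity) ht
  have htε : 2 * (‖x‖ + 1) ≤ t * ε := (div_le_iff₀ hε).1 ht
  apply riM_of_ball (ε := t * ε / 2) (by positivity)
  intro y hy
  rw [Metric.mem_ball, dist_eq_norm] at hy
  have key : t⁻¹ • y ∈ Metric.ball a ε := by
    rw [Metric.mem_ball, dist_eq_norm]
    have hid : t⁻¹ • y - a = t⁻¹ • (y - (x + t • a)) + t⁻¹ • x := by
      rw [smul_sub, smul_add, smul_smul, inv_mul_cancel₀ htpos.ne', one_smul]; abel
    rw [hid]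
    have hle : ‖t⁻¹ • (y - (x + t • a)) + t⁻¹ • x‖
        ≤ t⁻¹ * ‖y - (x + t • a)‖ + t⁻¹ * ‖x‖ := by
      refine (norm_add_le _ _).trans ?_
      rw [norm_smul, norm_smul, Real.norm_eq_abs, abs_of_pos (by positivity)]
    have hti : 0 < t⁻¹ := by positivity
    have h1 : t⁻¹ * ‖y - (x + t • a)‖ < t⁻¹ * (t * ε / 2) :=
      mul_lt_mul_of_pos_left hy hti
    have h2 : t⁻¹ * (t * ε / 2) = ε / 2 := by field_simp
    have h3 : t⁻¹ * ‖x‖ < ε / 2 := by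
      rw [inv_mul_lt_iff₀ htpos]
      nlinarith [norm_nonneg x]
    linarith [hle]
  have h4 := hcone t htpos.le _ (hball key)
  rwa [smul_inv_smul₀ htpos.ne'] at h4


variable {κ : ℕ}

def tl (x : EuclideanSpace ℝ (Fin (κ + 1))) : EuclideanSpace ℝ (Fin κ) := WithLp.toLp 2 (fun j : Fin κ => x j.succ)

lemma tl_apply (x : EuclideanSpace ℝ (Fin (κ + 1))) (j : Fin κ) : tl x j = x j.succ := rfl

lemma tl_add (x y : EuclideanSpace ℝ (Fin (κ + 1))) : tl (x + y) = tl x + tl y := by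
  ext j; simp [tl]

lemma tl_smul (t : ℝ) (x : EuclideanSpace ℝ (Fin (κ + 1))) : tl (t • x) = t • tl x := by
  ext j; simp [tl]

lemma tl_zero : tl (0 : EuclideanSpace ℝ (Fin (κ + 1))) = 0 := by ext j; simp [tl]

lemma tl_norm_le (x : EuclideanSpace ℝ (Fin (κ + 1))) : ‖tl x‖ ≤ ‖x‖ := by
  rw [EuclideanSpace.norm_eq, EuclideanSpace.norm_eq]
  apply Real.sqrt_le_sqrt
  rw [Fin.sum_univ_succ]
  simp only [tl_apply]
  exact le_add_of_nonneg_left (by positivity)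

lemma abs_apply0_le (x : EuclideanSpace ℝ (Fin (κ + 1))) : |x 0| ≤ ‖x‖ := by
  rw [EuclideanSpace.norm_eq]
  rw [← Real.sqrt_sq_eq_abs]
  apply Real.sqrt_le_sqrt
  rw [Fin.sum_univ_succ]
  simp only [Real.norm_eq_abs, sq_abs]
  exact le_add_of_nonneg_right (by positivity)

lemma mem_SOC_iff {x : EuclideanSpace ℝ (Fin (κ + 1))} : x ∈ SOC κ ↔ ‖tl x‖ ≤ x 0 := by
  simp [SOC, EuclideanSpace.norm_eq, tl_apply, Real.norm_eq_abs, sq_abs]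

lemma inner_split (d x : EuclideanSpace ℝ (Fin (κ + 1))) :
    ⟪d, x⟫ = d 0 * x 0 + ⟪tl d, tl x⟫ := by
  simp [PiLp.inner_apply, RCLike.inner_apply, Fin.sum_univ_succ, tl_apply]
  ring

lemma reflect_apply0 (x : EuclideanSpace ℝ (Fin (κ + 1))) : reflect x 0 = x 0 := by
  simp [reflect]

lemma tl_reflect (x : EuclideanSpace ℝ (Fin (κ + 1))) : tl (reflect x) = - tl x := by
  ext j; simp [tl_apply, reflect, Fin.succ_ne_zero]

lemma reflect_inner (d x : EuclideanSpace ℝ (Fin (κ + 1))) :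
    ⟪reflect d, x⟫ = d 0 * x 0 - ⟪tl d, tl x⟫ := by
  rw [inner_split, reflect_apply0, tl_reflect, inner_neg_left]; ring

lemma eq_zero_of_parts {x : EuclideanSpace ℝ (Fin (κ + 1))} (h0 : x 0 = 0) (ht : tl x = 0) :
    x = 0 := by
  ext j
  refine Fin.cases ?_ (fun i => ?_) j
  · simpa using h0
  · have := congrArg (fun f : EuclideanSpace ℝ (Fin κ) => f i) ht
    simpa [tl_apply] using this

lemma reflect_ne_zero {x : EuclideanSpace ℝ (Fin (κ + 1))} (h : x ≠ 0) : reflect x ≠ 0 := by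
  intro h0
  apply h
  have h1 : x 0 = 0 := by rw [← reflect_apply0 x, h0]; rfl
  have h2 : tl x = 0 := by
    have := tl_reflect x
    rw [h0, tl_zero] at this
    simpa using this.symm
  exact eq_zero_of_parts h1 h2

lemma soc_zero : (0 : EuclideanSpace ℝ (Fin (κ + 1))) ∈ SOC κ := by
  rw [mem_SOC_iff, tl_zero]
  simp

lemma soc_add {u v : EuclideanSpace ℝ (Fin (κ + 1))} (hu : u ∈ SOC κ) (hv : v ∈ SOC κ) :
    u + v ∈ SOC κ := by
  rw [mem_SOC_iff] at hu hv ⊢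
  rw [tl_add]
  have := norm_add_le (tl u) (tl v)
  have happ : (u + v) 0 = u 0 + v 0 := rfl
  rw [happ]; linarith

lemma soc_smul {u : EuclideanSpace ℝ (Fin (κ + 1))} {t : ℝ} (ht : 0 ≤ t) (hu : u ∈ SOC κ) :
    t • u ∈ SOC κ := by
  rw [mem_SOC_iff] at hu ⊢
  rw [tl_smul, norm_smul, Real.norm_eq_abs, abs_of_nonneg ht]
  have happ : (t • u) 0 = t * u 0 := rfl
  rw [happ]
  exact mul_le_mul_of_nonneg_left hu ht

lemma isOpen_strict_soc : IsOpen {x : EuclideanSpace ℝ (Fin (κ + 1)) | ‖tl x‖ < x 0} := by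
  have htl : Continuous (tl (κ := κ)) := by
    have : IsLinearMap ℝ (tl (κ := κ)) := ⟨tl_add, fun c x => tl_smul c x⟩
    exact LinearMap.continuous_of_finiteDimensional this.mk'
  have h0 : Continuous fun x : EuclideanSpace ℝ (Fin (κ + 1)) => x 0 :=
    (EuclideanSpace.proj (0 : Fin (κ + 1))).continuous
  exact isOpen_lt (continuous_norm.comp htl) h0

lemma mem_interior_SOC {x : EuclideanSpace ℝ (Fin (κ + 1))} (h : ‖tl x‖ < x 0) :
    x ∈ interior (SOC κ) :=
  interior_maximal (fun y hy => mem_SOC_iff.2 (le_of_lt hy)) isOpen_strict_soc h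

lemma not_strict_of_frontier {a : EuclideanSpace ℝ (Fin (κ + 1))}
    (hfr : a ∈ intrinsicFrontier ℝ (SOC κ)) : ¬ ‖tl a‖ < a 0 := by
  intro h
  have h1 : a ∈ intrinsicInterior ℝ (SOC κ) :=
    interior_subset_intrinsicInterior (mem_interior_SOC h)
  rw [← intrinsicClosure_diff_intrinsicFrontier] at h1
  exact h1.2 hfr

lemma h2_data {a : EuclideanSpace ℝ (Fin (κ + 1))} (ha : a ∈ SOC κ)
    (hfr : a ∈ intrinsicFrontier ℝ (SOC κ)) (h0 : a ≠ 0) : a 0 = ‖tl a‖ ∧ 0 < a 0 := by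
  have h1 : ‖tl a‖ ≤ a 0 := mem_SOC_iff.1 ha
  have h2 : a 0 = ‖tl a‖ := le_antisymm (not_lt.1 (not_strict_of_frontier hfr)) h1
  refine ⟨h2, ?_⟩
  rcases lt_or_ge 0 (a 0) with h | h
  · exact h
  · exfalso
    have h3 : ‖tl a‖ = 0 := le_antisymm (h2 ▸ h) (norm_nonneg _)
    have h4 : a 0 = 0 := by rw [h2, h3]
    exact h0 (eq_zero_of_parts h4 (norm_eq_zero.1 h3))

lemma halfspace_zero (d : EuclideanSpace ℝ (Fin (κ + 1))) :
    (0 : EuclideanSpace ℝ (Fin (κ + 1))) ∈ halfSpace d := by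
  simp [halfSpace]

lemma halfspace_add {d u v : EuclideanSpace ℝ (Fin (κ + 1))} (hu : u ∈ halfSpace d)
    (hv : v ∈ halfSpace d) : u + v ∈ halfSpace d := by
  simp only [halfSpace, Set.mem_setOf_eq, inner_add_right] at *
  linarith

lemma halfspace_smul {d u : EuclideanSpace ℝ (Fin (κ + 1))} {t : ℝ} (ht : 0 ≤ t)
    (hu : u ∈ halfSpace d) : t • u ∈ halfSpace d := by
  simp only [halfSpace, Set.mem_setOf_eq, real_inner_smul_right] at *
  positivity

lemma halfspace_ball {d : EuclideanSpace ℝ (Fin (κ + 1))} (hd : d ≠ 0) :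
    Metric.ball d ‖d‖ ⊆ halfSpace d := by
  intro y hy
  rw [Metric.mem_ball, dist_eq_norm] at hy
  have h1 : ⟪d, y⟫ = ⟪d, d⟫ - ⟪d, d - y⟫ := by rw [inner_sub_right]; ring
  have h2 : ⟪d, d - y⟫ ≤ ‖d‖ * ‖d - y‖ := real_inner_le_norm _ _
  have h3 : ‖d - y‖ = ‖y - d‖ := norm_sub_rev _ _
  have h4 : ⟪d, d⟫ = ‖d‖ * ‖d‖ := real_inner_self_eq_norm_mul_norm d
  have hdp : 0 < ‖d‖ := norm_pos_iff.2 hd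
  simp only [halfSpace, Set.mem_setOf_eq]
  nlinarith

lemma span_halfspace_top {d : EuclideanSpace ℝ (Fin (κ + 1))} (hd : d ≠ 0) :
    Submodule.span ℝ (halfSpace d) = ⊤ :=
  span_eq_top_of_ball (norm_pos_iff.2 hd) (halfspace_ball hd)

lemma soc_ball :
    Metric.ball (EuclideanSpace.single (0 : Fin (κ + 1)) (1:ℝ)) (1/2) ⊆ SOC κ := by
  intro y hy
  rw [Metric.mem_ball, dist_eq_norm] at hy
  set e : EuclideanSpace ℝ (Fin (κ + 1)) := EuclideanSpace.single (0 : Fin (κ + 1)) (1:ℝ)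
  have hte : tl e = 0 := by
    ext j; simp [tl_apply, e, EuclideanSpace.single_apply, Fin.succ_ne_zero]
  have he0 : e 0 = 1 := by simp [e, EuclideanSpace.single_apply]
  have h1 : tl y = tl (y - e) := by
    have : tl (y - e) = tl y - tl e := by
      have := tl_add (y - e) e
      rw [sub_add_cancel] at this
      rw [this, hte]; abel
    rw [this, hte, sub_zero]
  have h2 : ‖tl y‖ ≤ ‖y - e‖ := h1 ▸ tl_norm_le (y - e)
  have h3 : |(y - e) 0| ≤ ‖y - e‖ := abs_apply0_le _
  have h4 : (y - e) 0 = y 0 - 1 := by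
    have : (y - e) 0 = y 0 - e 0 := rfl
    rw [this, he0]
  rw [mem_SOC_iff]
  rw [h4] at h3
  have := abs_le.1 h3
  linarith [this.1]

lemma span_soc_top : Submodule.span ℝ (SOC κ) = ⊤ :=
  span_eq_top_of_ball (by norm_num) soc_ball

lemma soc_subset_halfspace_reflect {d : EuclideanSpace ℝ (Fin (κ + 1))} (hd : d ∈ SOC κ) :
    SOC κ ⊆ halfSpace (reflect d) := by
  intro x hx
  rw [mem_SOC_iff] at hd hx
  simp only [halfSpace, Set.mem_setOf_eq]
  rw [reflect_inner]
  have h1 : ⟪tl d, tl x⟫ ≤ ‖tl d‖ * ‖tl x‖ := real_inner_le_norm _ _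
  nlinarith [norm_nonneg (tl d), norm_nonneg (tl x)]

lemma ray_zero (d : EuclideanSpace ℝ (Fin (κ + 1))) :
    (0 : EuclideanSpace ℝ (Fin (κ + 1))) ∈ ray d :=
  ⟨0, le_refl 0, (zero_smul ℝ d).symm⟩

lemma ray_add {d u v : EuclideanSpace ℝ (Fin (κ + 1))} (hu : u ∈ ray d) (hv : v ∈ ray d) :
    u + v ∈ ray d := by
  obtain ⟨α, hα, rfl⟩ := hu
  obtain ⟨β, hβ, rfl⟩ := hv
  exact ⟨α + β, by linarith, by rw [add_smul]⟩

lemma ray_smul {d u : EuclideanSpace ℝ (Fin (κ + 1))} {t : ℝ} (ht : 0 ≤ t) (hu : u ∈ ray d) :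
    t • u ∈ ray d := by
  obtain ⟨α, hα, rfl⟩ := hu
  exact ⟨t * α, by positivity, by rw [mul_smul]⟩

lemma app0_add_smul (x a : EuclideanSpace ℝ (Fin (κ + 1))) (t : ℝ) :
    (x + t • a) 0 = x 0 + t * a 0 := rfl

lemma soc_shift_interior {a x : EuclideanSpace ℝ (Fin (κ + 1))} (ha0 : a 0 = ‖tl a‖)
    (hap : 0 < a 0) (hσ : 0 < a 0 * x 0 - ⟪tl a, tl x⟫) :
    ∃ T : ℝ, 0 ≤ T ∧ ∀ t : ℝ, T ≤ t → x + t • a ∈ interior (SOC κ) := by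
  set σ := a 0 * x 0 - ⟪tl a, tl x⟫ with hσdef
  set δ := (x 0)^2 - ‖tl x‖^2 with hδdef
  refine ⟨max ((1 + |δ|)/(2*σ)) ((1 + |x 0|)/(a 0)),
    le_max_of_le_left (by positivity), fun t ht => ?_⟩
  apply mem_interior_SOC
  have h1' : 1 + |δ| ≤ t * (2*σ) :=
    (div_le_iff₀ (by positivity)).1 (le_trans (le_max_left _ _) ht)
  have h2' : 1 + |x 0| ≤ t * a 0 :=
    (div_le_iff₀ hap).1 (le_trans (le_max_right _ _) ht)
  have hP : 0 < x 0 + t * a 0 := by nlinarith [neg_abs_le (x 0)]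
  have hNsq : ‖tl x + t • tl a‖^2 = ‖tl x‖^2 + 2*(t * ⟪tl a, tl x⟫) + t^2 * (a 0)^2 := by
    rw [norm_add_sq_real, real_inner_smul_right, norm_smul, Real.norm_eq_abs, mul_pow, sq_abs,
      ← ha0, real_inner_comm (tl x) (tl a)] <;> ring
  rw [tl_add, tl_smul, app0_add_smul]
  have key : (x 0 + t * a 0)^2 - ‖tl x + t • tl a‖^2 = δ + 2*t*σ := by
    rw [hNsq, hσdef, hδdef]; ring
  have h7 : 1 ≤ δ + 2*t*σ := by
    have := neg_abs_le δ; linarith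
  have h8 : ‖tl x + t • tl a‖^2 < (x 0 + t * a 0)^2 := by linarith
  exact lt_of_pow_lt_pow_left₀ 2 hP.le h8

lemma norm_e0 : ‖EuclideanSpace.single (0 : Fin (κ + 1)) (1:ℝ)‖ = 1 := by
  rw [EuclideanSpace.norm_single]; norm_num

lemma soc_shift_dist {a x : EuclideanSpace ℝ (Fin (κ + 1))} (ha0 : a 0 = ‖tl a‖)
    (hap : 0 < a 0) (hσ : 0 ≤ a 0 * x 0 - ⟪tl a, tl x⟫) {δ' : ℝ} (hδ' : 0 < δ') :
    ∃ T : ℝ, 0 ≤ T ∧ ∀ t : ℝ, T ≤ t → ∃ z ∈ SOC κ, dist (x + t • a) z ≤ δ' := by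
  set σ := a 0 * x 0 - ⟪tl a, tl x⟫ with hσdef
  set δ := (x 0)^2 - ‖tl x‖^2 with hδdef
  refine ⟨max 0 ((|δ|/δ' + 1 + |x 0|)/(a 0)), le_max_left _ _, fun t ht => ?_⟩
  have ht0 : 0 ≤ t := le_trans (le_max_left _ _) ht
  have h2' : |δ|/δ' + 1 + |x 0| ≤ t * a 0 :=
    (div_le_iff₀ hap).1 (le_trans (le_max_right _ _) ht)
  set N := ‖tl x + t • tl a‖ with hNdef
  set P := x 0 + t * a 0 with hPdef
  have hdd : 0 ≤ |δ|/δ' := by positivity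
  have hP : |δ|/δ' + 1 ≤ P := by
    have := neg_abs_le (x 0); simp only [hPdef]; nlinarith
  have hPpos : 0 < P := by nlinarith
  set s := max 0 (N - P) with hsdef
  set e : EuclideanSpace ℝ (Fin (κ + 1)) := EuclideanSpace.single (0 : Fin (κ + 1)) (1:ℝ)
    with hedef
  have hte : tl e = 0 := by
    ext j; simp [tl_apply, e, EuclideanSpace.single_apply, Fin.succ_ne_zero]
  have he0 : e 0 = 1 := by simp [e, EuclideanSpace.single_apply]
  have hs0 : 0 ≤ s := le_max_left _ _
  refine ⟨x + t • a + s • e, ?_, ?_⟩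
  · rw [mem_SOC_iff]
    have h1 : tl (x + t • a + s • e) = tl x + t • tl a := by
      rw [tl_add, tl_add, tl_smul, tl_smul, hte, smul_zero, add_zero]
    have h2 : (x + t • a + s • e) 0 = P + s := by
      have : (x + t • a + s • e) 0 = (x + t • a) 0 + s * e 0 := rfl
      rw [this, app0_add_smul, he0, mul_one]
    rw [h1, h2]
    have : N - P ≤ s := le_max_right _ _
    simp only [← hNdef]
    linarith
  · have hdist : dist (x + t • a) (x + t • a + s • e) = s := by
      rw [dist_eq_norm]
      have : x + t • a - (x + t • a + s • e) = -(s • e) := by abel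
      rw [this, norm_neg, norm_smul, Real.norm_eq_abs, abs_of_nonneg hs0, norm_e0, mul_one]
    rw [hdist]
    rcases le_or_gt N P with h | h
    · have : s = 0 := max_eq_left (by linarith)
      linarith
    · have hs : s = N - P := max_eq_right (by linarith)
      rw [hs]
      have hNsq : N^2 = ‖tl x‖^2 + 2*(t * ⟪tl a, tl x⟫) + t^2 * (a 0)^2 := by
        rw [hNdef, norm_add_sq_real, real_inner_smul_right, norm_smul, Real.norm_eq_abs,
          mul_pow, sq_abs, ← ha0, real_inner_comm (tl x) (tl a)] <;> ring
      have hN0 : 0 ≤ N := norm_nonneg _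
      have hPδ : |δ| + δ' ≤ P * δ' := by
        have h9 : (|δ|/δ' + 1) * δ' ≤ P * δ' := mul_le_mul_of_nonneg_right hP hδ'.le
        have h10 : (|δ|/δ' + 1) * δ' = |δ| + δ' := by field_simp
        nlinarith [h9, h10]
      have hkey : P^2 - N^2 = δ + 2*t*σ := by
        rw [hNsq, hPdef, hσdef, hδdef]; ring
      have h5 : 0 ≤ 2 * t * σ := by positivity
      have h6 : -|δ| ≤ δ := neg_abs_le δ
      have hNP : N^2 ≤ P^2 + |δ| := by linarith
      have habs : 0 ≤ |δ| := abs_nonneg δ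
      have hexp : (P + δ')^2 = P^2 + 2*(P*δ') + δ'^2 := by ring
      have hPd : 0 ≤ P * δ' := le_of_lt (mul_pos hPpos hδ')
      have h11 : N^2 ≤ (P + δ')^2 := by
        rw [hexp]; linarith [sq_nonneg δ']
      have h12 : N ≤ P + δ' := le_of_pow_le_pow_left₀ (by norm_num) (by linarith) h11
      linarith


lemma riM_halfspace_pos {a x : EuclideanSpace ℝ (Fin (κ + 1))} (ha : a ≠ 0)
    (h : RiM (halfSpace (reflect a)) x) : 0 < a 0 * x 0 - ⟪tl a, tl x⟫ := by
  have hd : reflect a ≠ 0 := reflect_ne_zero ha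
  have hdp : (0:ℝ) < ‖reflect a‖ := norm_pos_iff.2 hd
  obtain ⟨ε, hε, hball⟩ := h.ball' (span_halfspace_top hd)
  set c : ℝ := ε / (2 * ‖reflect a‖) with hcdef
  have hc : 0 < c := by positivity
  have hmem : x - c • reflect a ∈ halfSpace (reflect a) := by
    apply hball
    rw [Metric.mem_ball, dist_eq_norm]
    have : x - c • reflect a - x = -(c • reflect a) := by abel
    rw [this, norm_neg, norm_smul, Real.norm_eq_abs, abs_of_pos hc, hcdef]
    have h5 : ε / (2 * ‖reflect a‖) * ‖reflect a‖ = ε / 2 := by field_simp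
    rw [h5]
    linarith
  have h1 : (0:ℝ) ≤ ⟪reflect a, x - c • reflect a⟫ := hmem
  rw [inner_sub_right, real_inner_smul_right, real_inner_self_eq_norm_mul_norm] at h1
  have h2 : 0 < c * (‖reflect a‖ * ‖reflect a‖) := by positivity
  have h3 : 0 < ⟪reflect a, x⟫ := by linarith
  rwa [reflect_inner] at h3

lemma intrinsic_soc_ball {a : EuclideanSpace ℝ (Fin (κ + 1))}
    (h : a ∈ intrinsicInterior ℝ (SOC κ)) : ∃ ε > 0, Metric.ball a ε ⊆ SOC κ :=
  ((mem_intrinsicInterior_iff_riM soc_zero).1 h).ball' span_soc_top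

lemma halfspace_sigma_nonneg {a x : EuclideanSpace ℝ (Fin (κ + 1))}
    (h : x ∈ halfSpace (reflect a)) : 0 ≤ a 0 * x 0 - ⟪tl a, tl x⟫ := by
  have h1 : (0:ℝ) ≤ ⟪reflect a, x⟫ := h
  rwa [reflect_inner] at h1


section ProdSection

variable {m : ℕ} {k : Fin m → ℕ} {B : ∀ i, Set (EuclideanSpace ℝ (Fin (k i + 1)))}

def singTS (k : Fin m → ℕ) (i : Fin m) :
    EuclideanSpace ℝ (Fin (k i + 1)) →ₗ[ℝ] TS k :=
  (WithLp.linearEquiv 2 ℝ (∀ i, EuclideanSpace ℝ (Fin (k i + 1)))).symm.toLinearMap.comp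
    (LinearMap.single ℝ (fun i => EuclideanSpace ℝ (Fin (k i + 1))) i)

lemma singTS_apply (i : Fin m) (v : EuclideanSpace ℝ (Fin (k i + 1))) (j : Fin m) :
    singTS k i v j
      = (Pi.single i v : ∀ j, EuclideanSpace ℝ (Fin (k j + 1))) j := rfl

lemma prod_zero_mem (h0 : ∀ i, (0 : EuclideanSpace ℝ (Fin (k i + 1))) ∈ B i) :
    (0 : TS k) ∈ prodSet k B := fun i => h0 i

lemma mem_span_prod (h0 : ∀ i, (0 : EuclideanSpace ℝ (Fin (k i + 1))) ∈ B i) (x : TS k) :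
    x ∈ Submodule.span ℝ (prodSet k B) ↔ ∀ i, x i ∈ Submodule.span ℝ (B i) := by
  constructor
  · intro hx
    let P : Submodule ℝ (TS k) :=
      { carrier := {x : TS k | ∀ i, x i ∈ Submodule.span ℝ (B i)}
        add_mem' := fun hu hv i => by
          rw [PiLp.add_apply]; exact Submodule.add_mem _ (hu i) (hv i)
        zero_mem' := fun i => by rw [PiLp.zero_apply]; exact Submodule.zero_mem _
        smul_mem' := fun c u hu i => by
          rw [PiLp.smul_apply]; exact Submodule.smul_mem _ _ (hu i) }
    have hle : Submodule.span ℝ (prodSet k B) ≤ P :=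
      Submodule.span_le.2 fun y hy i => Submodule.subset_span (hy i)
    exact hle hx
  · intro h
    have hx : x = ∑ i, singTS k i (x i) := by
      have h1 : ∀ j, (∑ i, singTS k i (x i)) j = x j := by
        intro j
        have h2 : (∑ i, singTS k i (x i)) j = ∑ i, singTS k i (x i) j :=
          by rw [WithLp.ofLp_sum, Finset.sum_apply]
        rw [h2]
        simp only [singTS_apply]
        exact Fintype.sum_pi_single j (fun i => x i)
      exact (PiLp.ext h1).symm
    rw [hx]
    refine Submodule.sum_mem _ fun i _ => ?_
    have h3 : singTS k i (x i) ∈ Submodule.map (singTS k i) (Submodule.span ℝ (B i)) :=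
      Submodule.mem_map_of_mem (h i)
    rw [Submodule.map_span] at h3
    refine Submodule.span_mono ?_ h3
    rintro _ ⟨b, hb, rfl⟩
    intro j
    rcases eq_or_ne j i with rfl | hne
    · rw [singTS_apply, Pi.single_eq_same]; exact hb
    · rw [singTS_apply, Pi.single_eq_of_ne hne]; exact h0 j

lemma dist_coord_le (x y : TS k) (i : Fin m) : dist (x i) (y i) ≤ dist x y := by
  rw [PiLp.dist_eq_of_L2 x y]
  rw [← Real.sqrt_sq (dist_nonneg (x := x i) (y := y i))]
  exact Real.sqrt_le_sqrt (Finset.single_le_sum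
    (f := fun j => dist (x j) (y j) ^ 2) (fun j _ => sq_nonneg _) (Finset.mem_univ i))

lemma dist_le_of_coords {x y : TS k} {δ : ℝ} (hδ : 0 ≤ δ)
    (h : ∀ i, dist (x i) (y i) ≤ δ) : dist x y ≤ δ * Real.sqrt m := by
  rw [PiLp.dist_eq_of_L2 x y]
  have h1 : ∑ i, dist (x i) (y i) ^ 2 ≤ (m : ℝ) * δ ^ 2 := by
    calc ∑ i, dist (x i) (y i) ^ 2 ≤ ∑ _i : Fin m, δ ^ 2 :=
          Finset.sum_le_sum fun i _ => pow_le_pow_left₀ dist_nonneg (h i) 2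
    _ = (m : ℝ) * δ ^ 2 := by
        rw [Finset.sum_const, Finset.card_univ, Fintype.card_fin, nsmul_eq_mul]
  calc Real.sqrt (∑ i, dist (x i) (y i) ^ 2) ≤ Real.sqrt ((m : ℝ) * δ ^ 2) :=
        Real.sqrt_le_sqrt h1
  _ = δ * Real.sqrt m := by
      rw [Real.sqrt_mul (Nat.cast_nonneg m), Real.sqrt_sq hδ, mul_comm]

lemma exists_pos_le_forall (f : Fin m → ℝ) (hf : ∀ i, 0 < f i) :
    ∃ ε > 0, ∀ i, ε ≤ f i := by
  rcases isEmpty_or_nonempty (Fin m) with h | h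
  · exact ⟨1, one_pos, fun i => (h.false i).elim⟩
  · have hpos : 0 < Finset.univ.inf' Finset.univ_nonempty f :=
      (Finset.lt_inf'_iff _).2 fun i _ => hf i
    exact ⟨_, hpos, fun i => Finset.inf'_le f (Finset.mem_univ i)⟩


end ProdSection


section BlockDispatch

variable {κ : ℕ}

lemma block_zero_mem {Bb : Set (EuclideanSpace ℝ (Fin (κ + 1)))} (h : IsESOCBlock Bb) :
    (0 : EuclideanSpace ℝ (Fin (κ + 1))) ∈ Bb := by
  rcases h with h | h | h | ⟨d, hd, hne, h⟩ | ⟨d, hd, h⟩ <;> subst h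
  · rfl
  · trivial
  · exact soc_zero
  · exact halfspace_zero d
  · exact ray_zero d

lemma block_add {Bb : Set (EuclideanSpace ℝ (Fin (κ + 1)))} (h : IsESOCBlock Bb) :
    ∀ u ∈ Bb, ∀ v ∈ Bb, u + v ∈ Bb := by
  rcases h with h | h | h | ⟨d, hd, hne, h⟩ | ⟨d, hd, h⟩ <;> subst h
  · intro u hu v hv; rw [Set.mem_singleton_iff] at *; rw [hu, hv, add_zero]
  · intro u _ v _; trivial
  · exact fun u hu v hv => soc_add hu hv
  · exact fun u hu v hv => halfspace_add hu hv
  · exact fun u hu v hv => ray_add hu hv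

lemma block_smul {Bb : Set (EuclideanSpace ℝ (Fin (κ + 1)))} (h : IsESOCBlock Bb) :
    ∀ t : ℝ, 0 ≤ t → ∀ u ∈ Bb, t • u ∈ Bb := by
  rcases h with h | h | h | ⟨d, hd, hne, h⟩ | ⟨d, hd, h⟩ <;> subst h
  · intro t ht u hu; rw [Set.mem_singleton_iff] at *; rw [hu, smul_zero]
  · intro t _ u _; trivial
  · exact fun t ht u hu => soc_smul ht hu
  · exact fun t ht u hu => halfspace_smul ht hu
  · exact fun t ht u hu => ray_smul ht hu

end BlockDispatch

section ProdRi

variable {m : ℕ} {k : Fin m → ℕ} {B : ∀ i, Set (EuclideanSpace ℝ (Fin (k i + 1)))}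

lemma prodRiM_to_intrinsic (h0 : ∀ i, (0 : EuclideanSpace ℝ (Fin (k i + 1))) ∈ B i)
    {x : TS k} (h : ∀ i, RiM (B i) (x i)) : x ∈ intrinsicInterior ℝ (prodSet k B) := by
  rw [mem_intrinsicInterior_iff_riM (prod_zero_mem h0)]
  refine ⟨(mem_span_prod h0 x).2 fun i => (h i).1, ?_⟩
  choose ε hε using fun i => (h i).2
  obtain ⟨ε0, hε0, hle⟩ := exists_pos_le_forall ε (fun i => (hε i).1)
  refine ⟨ε0, hε0, fun y hy hd i => ?_⟩
  refine (hε i).2 (y i) ((mem_span_prod h0 y).1 hy i) ?_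
  exact lt_of_le_of_lt (dist_coord_le y x i) (lt_of_lt_of_le hd (hle i))

lemma singTS_eq (i : Fin m) (v : EuclideanSpace ℝ (Fin (k i + 1))) :
    singTS k i v
      = (WithLp.equiv 2 (∀ j, EuclideanSpace ℝ (Fin (k j + 1)))).symm (Pi.single i v) := rfl

lemma intrinsic_to_prodRiM (h0 : ∀ i, (0 : EuclideanSpace ℝ (Fin (k i + 1))) ∈ B i)
    {x : TS k} (h : x ∈ intrinsicInterior ℝ (prodSet k B)) (i : Fin m) : RiM (B i) (x i) := by
  rw [mem_intrinsicInterior_iff_riM (prod_zero_mem h0)] at h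
  obtain ⟨hsp, ε, hε, hb⟩ := h
  have hspi := (mem_span_prod h0 x).1 hsp
  refine ⟨hspi i, ε, hε, fun z hz hd => ?_⟩
  set y : TS k := x + singTS k i (z - x i) with hydef
  have hyi : y i = z := by
    rw [hydef]
    have h1 : (x + singTS k i (z - x i)) i = x i + singTS k i (z - x i) i := rfl
    rw [h1, singTS_apply, Pi.single_eq_same, add_sub_cancel]
  have hyj : ∀ j, j ≠ i → y j = x j := by
    intro j hj
    rw [hydef]
    have h1 : (x + singTS k i (z - x i)) j = x j + singTS k i (z - x i) j := rfl
    rw [h1, singTS_apply, Pi.single_eq_of_ne hj, add_zero]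
  have h1 : y ∈ Submodule.span ℝ (prodSet k B) := by
    rw [mem_span_prod h0]
    intro j
    rcases eq_or_ne j i with rfl | hj
    · rw [hyi]; exact hz
    · rw [hyj j hj]; exact hspi j
  have h2 : dist y x < ε := by
    have h3 : dist y x = ‖singTS k i (z - x i)‖ := by
      rw [hydef, dist_eq_norm, add_sub_cancel_left]
    rw [h3, singTS_eq, WithLp.equiv_symm_apply, PiLp.norm_toLp_single, ← dist_eq_norm]
    exact hd
  have h4 := hb y h1 h2 i
  rwa [hyi] at h4

end ProdRi

section SetDistFacts

variable {W : Type*} [NormedAddCommGroup W]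

lemma setDist_le' {A C : Set W} {p q : W} (hp : p ∈ A) (hq : q ∈ C) :
    setDist A C ≤ dist p q := by
  apply csInf_le
  · refine ⟨0, fun d hd => ?_⟩
    obtain ⟨u, hu, v, hv, rfl⟩ := Set.mem_image2.1 hd
    exact dist_nonneg
  · exact Set.mem_image2_of_mem hp hq

lemma setDist_nonneg' {A C : Set W} (hA : A.Nonempty) (hC : C.Nonempty) :
    0 ≤ setDist A C := by
  apply le_csInf (hA.image2 hC)
  rintro d hd
  obtain ⟨u, hu, v, hv, rfl⟩ := Set.mem_image2.1 hd
  exact dist_nonneg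

lemma setDist_anti {A A' C : Set W} (h : A ⊆ A') (hA : A.Nonempty) (hC : C.Nonempty) :
    setDist A' C ≤ setDist A C := by
  apply le_csInf (hA.image2 hC)
  rintro d hd
  obtain ⟨u, hu, v, hv, rfl⟩ := Set.mem_image2.1 hd
  exact setDist_le' (h hu) hv

lemma setDist_eq_zero' {A C : Set W} (hA : A.Nonempty) (hC : C.Nonempty)
    (h : ∀ δ : ℝ, 0 < δ → ∃ p ∈ A, ∃ q ∈ C, dist p q ≤ δ) : setDist A C = 0 := by
  refine le_antisymm ?_ (setDist_nonneg' hA hC)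
  refine le_of_forall_pos_le_add fun δ hδ => ?_
  obtain ⟨p, hp, q, hq, hpq⟩ := h δ hδ
  calc setDist A C ≤ dist p q := setDist_le' hp hq
  _ ≤ δ := hpq
  _ = 0 + δ := (zero_add δ).symm

lemma exists_pair_of_setDist_lt {A C : Set W} (hA : A.Nonempty) (hC : C.Nonempty) {δ : ℝ}
    (h : setDist A C < δ) : ∃ p ∈ A, ∃ q ∈ C, dist p q < δ := by
  obtain ⟨d, hd, hlt⟩ := exists_lt_of_csInf_lt (hA.image2 hC) h
  obtain ⟨u, hu, v, hv, rfl⟩ := Set.mem_image2.1 hd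
  exact ⟨u, hu, v, hv, hlt⟩

end SetDistFacts

section AffineSetFacts

variable {W : Type*} [NormedAddCommGroup W] [Module ℝ W]

lemma c_mem_affineSet (L : Submodule ℝ W) (c : W) : c ∈ affineSet L c := by
  simp only [affineSet, Set.mem_setOf_eq, sub_self]
  exact Submodule.zero_mem L

lemma affineSet_add_mem {L : Submodule ℝ W} {c x : W} (hx : x ∈ affineSet L c) {a : W}
    (ha : a ∈ L) (t : ℝ) : x + t • a ∈ affineSet L c := by
  simp only [affineSet, Set.mem_setOf_eq] at *
  have h : x + t • a - c = (x - c) + t • a := by abel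
  rw [h]
  exact Submodule.add_mem _ hx (Submodule.smul_mem _ _ ha)

lemma weakStatus_iff_not (K : Set W) (L : Submodule ℝ W) (c : W) (hK : K.Nonempty) :
    WeakStatus K L c ↔ ¬ StronglyFeasible K L c ∧ ¬ StronglyInfeasible K L c := by
  constructor
  · rintro (⟨⟨z, hzK, hzL⟩, hri⟩ | ⟨hempty, hdist⟩)
    · refine ⟨fun hw => ?_, fun hw => ?_⟩
      · obtain ⟨w, hw⟩ := hw
        exact Set.eq_empty_iff_forall_notMem.1 hri w hw
      · obtain ⟨hw1, hw2⟩ := hw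
        exact Set.eq_empty_iff_forall_notMem.1 hw1 z ⟨hzK, hzL⟩
    · refine ⟨fun hw => ?_, fun hw => ?_⟩
      · obtain ⟨w, hwL, hwri⟩ := hw
        exact Set.eq_empty_iff_forall_notMem.1 hempty w ⟨intrinsicInterior_subset hwri, hwL⟩
      · obtain ⟨hw1, hw2⟩ := hw
        rw [hdist] at hw2
        exact lt_irrefl 0 hw2
  · rintro ⟨hnsf, hnsi⟩
    rcases Set.eq_empty_or_nonempty (K ∩ affineSet L c) with hemp | hne
    · right
      refine ⟨hemp, ?_⟩
      have hge : 0 ≤ setDist K (affineSet L c) := setDist_nonneg' hK ⟨c, c_mem_affineSet L c⟩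
      exact le_antisymm (not_lt.1 fun hlt => hnsi ⟨hemp, hlt⟩) hge
    · left
      exact ⟨hne, Set.not_nonempty_iff_eq_empty.1 fun hn => hnsf hn⟩

end AffineSetFacts

/-- **Theorem 1(ii).** Let `(K, L, c)` be a feasibility problem where
`K = K^{n_1} × ⋯ × K^{n_m}` is an extended second order cone, `L` a linear subspace and
`c` a point.  Suppose there is a nonzero `a ∈ K ∩ L` with `H₁(a) ∪ H₂(a) ≠ ∅` and let `K̃`
be the relaxed cone obtained from `K` and `a`.  Then `(K, L, c)` is in weak status if and
only if `(K̃, L, c)` is in weak status. -/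
theorem relaxation_weak_status_iff {m : ℕ} (k : Fin m → ℕ)
    (B : ∀ i, Set (EuclideanSpace ℝ (Fin (k i + 1)))) (hB : IsESOC k B)
    (L : Submodule ℝ (TS k)) (c : TS k) (a : TS k)
    (haK : a ∈ prodSet k B) (haL : a ∈ L) (ha0 : a ≠ 0)
    (hH : (H1 k B a ∪ H2 k B a).Nonempty) :
    WeakStatus (prodSet k B) L c ↔
      WeakStatus (prodSet k (relaxedBlocks k B a)) L c := by
  set Bt := relaxedBlocks k B a with hBt
  have h0B : ∀ i, (0 : EuclideanSpace ℝ (Fin (k i + 1))) ∈ B i :=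
    fun i => block_zero_mem (hB i)
  have hrelH1 : ∀ i ∈ H1 k B a, Bt i = Set.univ := by
    intro i hi
    rw [hBt]
    simp only [relaxedBlocks]
    rw [if_pos hi]
  have hrelH2 : ∀ i, i ∉ H1 k B a → i ∈ H2 k B a → Bt i = halfSpace (reflect (a i)) := by
    intro i h1 h2
    rw [hBt]
    simp only [relaxedBlocks]
    rw [if_neg h1, if_pos h2]
  have hrelO : ∀ i, i ∉ H1 k B a → i ∉ H2 k B a → Bt i = B i := by
    intro i h1 h2
    rw [hBt]
    simp only [relaxedBlocks]
    rw [if_neg h1, if_neg h2]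
  have h0Bt : ∀ i, (0 : EuclideanSpace ℝ (Fin (k i + 1))) ∈ Bt i := by
    intro i
    by_cases h1 : i ∈ H1 k B a
    · rw [hrelH1 i h1]; trivial
    by_cases h2 : i ∈ H2 k B a
    · rw [hrelH2 i h1 h2]; exact halfspace_zero _
    · rw [hrelO i h1 h2]; exact h0B i
  have hsub : prodSet k B ⊆ prodSet k Bt := by
    intro x hx i
    by_cases h1 : i ∈ H1 k B a
    · rw [hrelH1 i h1]; trivial
    by_cases h2 : i ∈ H2 k B a
    · rw [hrelH2 i h1 h2]
      have hBi : B i = SOC (k i) := h2.1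
      exact soc_subset_halfspace_reflect (hBi ▸ haK i) (hBi ▸ hx i)
    · rw [hrelO i h1 h2]; exact hx i
  have haKt : a ∈ prodSet k Bt := hsub haK
  have hcne : (affineSet L c).Nonempty := ⟨c, c_mem_affineSet L c⟩
  -- Strong feasibility transfers
  have hSF : StronglyFeasible (prodSet k B) L c ↔ StronglyFeasible (prodSet k Bt) L c := by
    constructor
    · rintro ⟨x, hxL, hxri⟩
      refine ⟨x, hxL, prodRiM_to_intrinsic h0Bt fun i => ?_⟩
      have hri := intrinsic_to_prodRiM h0B hxri i
      by_cases h1 : i ∈ H1 k B a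
      · rw [hrelH1 i h1]; exact riM_univ _
      by_cases h2 : i ∈ H2 k B a
      · rw [hrelH2 i h1 h2]
        have hBi : B i = SOC (k i) := h2.1
        refine hri.mono' ?_ ?_
        · rw [hBi]; exact soc_subset_halfspace_reflect (hBi ▸ haK i)
        · rw [span_halfspace_top (reflect_ne_zero h2.2.2), hBi, span_soc_top]
      · rw [hrelO i h1 h2]; exact hri
    · rintro ⟨x, hxL, hxri⟩
      have hri := intrinsic_to_prodRiM h0Bt hxri
      have hth : ∀ i, ∃ T : ℝ, 0 ≤ T ∧ ∀ t : ℝ, T ≤ t → RiM (B i) (x i + t • a i) := by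
        intro i
        by_cases h1 : i ∈ H1 k B a
        · have hBi : B i = SOC (k i) := h1.1
          obtain ⟨ε, hε, hball⟩ := intrinsic_soc_ball h1.2
          rw [hBi]
          exact riM_shift_of_ball (fun t ht u hu => soc_smul ht hu) hε hball (x i)
        by_cases h2 : i ∈ H2 k B a
        · have hBi : B i = SOC (k i) := h2.1
          have hrihs : RiM (halfSpace (reflect (a i))) (x i) := by
            rw [← hrelH2 i h1 h2]; exact hri i
          have hσ := riM_halfspace_pos h2.2.2 hrihs
          have hdata := h2_data (hBi ▸ haK i) h2.2.1 h2.2.2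
          obtain ⟨T, hT, hmem⟩ := soc_shift_interior hdata.1 hdata.2 hσ
          refine ⟨T, hT, fun t ht => ?_⟩
          rw [hBi]
          exact riM_of_mem_interior (hmem t ht)
        · refine ⟨0, le_refl 0, fun t ht => ?_⟩
          have hxi : RiM (B i) (x i) := by rw [← hrelO i h1 h2]; exact hri i
          exact hxi.add_mem' (block_add (hB i)) (block_smul (hB i) t ht _ (haK i))
      choose T hT0 hTall using hth
      set t := ∑ i, T i with htdef
      have htge : ∀ i, T i ≤ t :=
        fun i => Finset.single_le_sum (fun j _ => hT0 j) (Finset.mem_univ i)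
      refine ⟨x + t • a, affineSet_add_mem hxL haL t, prodRiM_to_intrinsic h0B fun i => ?_⟩
      exact hTall i t (htge i)
  -- Key approximation lemma
  have hKL : ∀ x ∈ prodSet k Bt, ∀ δ : ℝ, 0 < δ →
      ∃ t : ℝ, 0 ≤ t ∧ ∃ z ∈ prodSet k B, dist (x + t • a) z ≤ δ := by
    intro x hx δ hδ
    set δ' := δ / (Real.sqrt m + 1) with hδ'def
    have hs0 : (0:ℝ) ≤ Real.sqrt m := Real.sqrt_nonneg _
    have hδ'pos : 0 < δ' := div_pos hδ (by positivity)
    have hth : ∀ i, ∃ T : ℝ, 0 ≤ T ∧ ∀ t : ℝ, T ≤ t →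
        ∃ z ∈ B i, dist (x i + t • a i) z ≤ δ' := by
      intro i
      by_cases h1 : i ∈ H1 k B a
      · have hBi : B i = SOC (k i) := h1.1
        obtain ⟨ε, hε, hball⟩ := intrinsic_soc_ball h1.2
        obtain ⟨T, hT, hmem⟩ :=
          riM_shift_of_ball (fun t ht u hu => soc_smul ht hu) hε hball (x i)
        exact ⟨T, hT, fun t hti =>
          ⟨x i + t • a i, hBi ▸ (hmem t hti).mem', by rw [dist_self]; exact hδ'pos.le⟩⟩
      by_cases h2 : i ∈ H2 k B a
      · have hBi : B i = SOC (k i) := h2.1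
        have hdata := h2_data (hBi ▸ haK i) h2.2.1 h2.2.2
        have hxhs : x i ∈ halfSpace (reflect (a i)) := by
          rw [← hrelH2 i h1 h2]; exact hx i
        obtain ⟨T, hT, hz⟩ :=
          soc_shift_dist hdata.1 hdata.2 (halfspace_sigma_nonneg hxhs) hδ'pos
        refine ⟨T, hT, fun t hti => ?_⟩
        rw [hBi]
        exact hz t hti
      · refine ⟨0, le_refl 0, fun t hti =>
          ⟨x i + t • a i, ?_, by rw [dist_self]; exact hδ'pos.le⟩⟩
        have hxi : x i ∈ B i := by rw [← hrelO i h1 h2]; exact hx i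
        exact block_add (hB i) _ hxi _ (block_smul (hB i) t hti _ (haK i))
    choose T hT0 hTf using hth
    set t := ∑ i, T i with htdef
    have htge : ∀ i, T i ≤ t :=
      fun i => Finset.single_le_sum (fun j _ => hT0 j) (Finset.mem_univ i)
    have ht0 : 0 ≤ t := Finset.sum_nonneg fun i _ => hT0 i
    choose z hzB hzd using fun i => hTf i t (htge i)
    set zz : TS k := (WithLp.equiv 2 (∀ j, EuclideanSpace ℝ (Fin (k j + 1)))).symm
      (fun i => z i) with hzzdef
    have hzzi : ∀ i, zz i = z i := fun i => rfl
    refine ⟨t, ht0, zz, fun i => by rw [hzzi i]; exact hzB i, ?_⟩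
    have hcoord : ∀ i, dist ((x + t • a) i) (zz i) ≤ δ' := by
      intro i
      rw [hzzi i]
      exact hzd i
    refine le_trans (dist_le_of_coords hδ'pos.le hcoord) ?_
    rw [hδ'def, div_mul_eq_mul_div, div_le_iff₀ (by positivity)]
    nlinarith
  -- Strong infeasibility transfers
  have hSI : StronglyInfeasible (prodSet k B) L c ↔ StronglyInfeasible (prodSet k Bt) L c := by
    constructor
    · rintro ⟨hemp, hpos⟩
      have hnoint : prodSet k Bt ∩ affineSet L c = ∅ := by
        rw [Set.eq_empty_iff_forall_notMem]
        rintro x ⟨hxK, hxL⟩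
        have hzero : setDist (prodSet k B) (affineSet L c) = 0 := by
          apply setDist_eq_zero' ⟨a, haK⟩ hcne
          intro δ hδ
          obtain ⟨t, ht0, zw, hzw, hdistw⟩ := hKL x hxK δ hδ
          exact ⟨zw, hzw, x + t • a, affineSet_add_mem hxL haL t,
            by rw [dist_comm]; exact hdistw⟩
        rw [hzero] at hpos
        exact lt_irrefl 0 hpos
      refine ⟨hnoint, ?_⟩
      have hge : 0 ≤ setDist (prodSet k Bt) (affineSet L c) := setDist_nonneg' ⟨a, haKt⟩ hcne
      rcases eq_or_lt_of_le hge with heq | hlt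
      swap
      · exact hlt
      exfalso
      have hzero : setDist (prodSet k B) (affineSet L c) = 0 := by
        apply setDist_eq_zero' ⟨a, haK⟩ hcne
        intro δ hδ
        have hlt2 : setDist (prodSet k Bt) (affineSet L c) < δ / 2 := by
          rw [← heq]; linarith
        obtain ⟨u, huK, v, hvL, huv⟩ := exists_pair_of_setDist_lt ⟨a, haKt⟩ hcne hlt2
        obtain ⟨t, ht0, zw, hzw, hdz⟩ := hKL u huK (δ / 2) (by linarith)
        refine ⟨zw, hzw, v + t • a, affineSet_add_mem hvL haL t, ?_⟩
        have h5 : dist (u + t • a) (v + t • a) = dist u v := dist_add_right u v (t • a)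
        calc dist zw (v + t • a)
            ≤ dist zw (u + t • a) + dist (u + t • a) (v + t • a) := dist_triangle _ _ _
        _ = dist (u + t • a) zw + dist u v := by rw [dist_comm zw (u + t • a), h5]
        _ ≤ δ / 2 + δ / 2 := add_le_add hdz (le_of_lt huv)
        _ = δ := by ring
      rw [hzero] at hpos
      exact lt_irrefl 0 hpos
    · rintro ⟨hemp, hpos⟩
      constructor
      · rw [Set.eq_empty_iff_forall_notMem] at hemp ⊢
        exact fun x hx => hemp x ⟨hsub hx.1, hx.2⟩
      · exact lt_of_lt_of_le hpos (setDist_anti hsub ⟨a, haK⟩ hcne)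
  rw [weakStatus_iff_not _ _ _ ⟨a, haK⟩, weakStatus_iff_not _ _ _ ⟨a, haKt⟩, hSF, hSI]


end
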